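/- Let s = I(0_K, a_1, ..., a_{T-1}) and s' = I(1_K, a_1, ..., a_{T-1}), and τ = τ_1·T + τ_2 with 1 ≤ τ_2 ≤ T-1. Then R_{ss'}(τ) = R_s(τ) + 2·d(a_{T-τ_2}) and R_{s's}(τ) = R_s(τ) + 2·d(a_{τ_2}). -/

import Mathlib

/-- Periodic (cross-)correlation of binary sequences of period `N`. -/
def corr (N : ℕ) (a b : ℕ → ZMod 2) (τ : ℕ) : ℤ :=
  ∑ t ∈ Finset.range N, (-1 : ℤ) ^ ((a t + b (t + τ)).val)

/-- Balance difference `d(a) = 2|support(a)| - K` of a sequence of period `K`. -/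
def bal (K : ℕ) (a : ℕ → ZMod 2) : ℤ :=
  2 * ((((Finset.range K).filter (fun k => a k = 1)).card : ℤ)) - (K : ℤ)

private lemma reindex (K T : ℕ) (f : ℕ → ℤ) :
    ∑ t ∈ Finset.range (K*T), f t = ∑ k ∈ Finset.range K, ∑ i ∈ Finset.range T, f (k*T+i) := by
  induction K with
  | zero => simp
  | succ n ih =>
      rw [Nat.succ_mul, Finset.sum_range_add, ih, Finset.sum_range_succ]

private lemma shift1 (K : ℕ) (g : ℕ → ℤ) (hg : ∀ k, g (k+K) = g k) :
    ∑ k ∈ Finset.range K, g (k+1) = ∑ k ∈ Finset.range K, g k := by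
  have h1 := Finset.sum_range_succ g K
  have h2 := Finset.sum_range_succ' g K
  have h3 : g K = g 0 := by simpa using hg 0
  omega

private lemma shiftm (K : ℕ) (g : ℕ → ℤ) (hg : ∀ k, g (k+K) = g k) (m : ℕ) :
    ∑ k ∈ Finset.range K, g (k+m) = ∑ k ∈ Finset.range K, g k := by
  induction m with
  | zero => simp
  | succ m ih =>
      have hper : ∀ k, g (k + K + m) = g (k + m) := by
        intro k
        have h : k + K + m = (k + m) + K := by ring
        rw [h, hg]
      have h2 := shift1 K (fun k => g (k + m)) hper
      calc ∑ k ∈ Finset.range K, g (k+(m+1)) = ∑ k ∈ Finset.range K, g (k+1+m) := by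
            apply Finset.sum_congr rfl; intro k _; congr 1; ring
        _ = ∑ k ∈ Finset.range K, g (k+m) := h2
        _ = _ := ih

private lemma balsum (K : ℕ) (b : ℕ → ZMod 2) :
    ∑ k ∈ Finset.range K, (-2 : ℤ) * (-1)^((b k).val) = 2 * bal K b := by
  have : ∀ k, (-2 : ℤ) * (-1)^((b k).val) = 4 * (if b k = 1 then 1 else 0) - 2 := by
    intro k
    have : ∀ x : ZMod 2, (-2 : ℤ) * (-1)^(x.val) = 4 * (if x = 1 then 1 else 0) - 2 := by decide
    exact this (b k)
  rw [Finset.sum_congr rfl (fun k _ => this k), Finset.sum_sub_distrib, ← Finset.mul_sum,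
    Finset.sum_boole, bal]
  simp [Finset.filter_congr_decidable]
  ring

theorem stmt6 (K T : ℕ) (hK : 0 < K) (hT : 0 < T)
    (a : ℕ → ℕ → ZMod 2) (s s' : ℕ → ZMod 2)
    (ha : ∀ i, Function.Periodic (a i) K)
    (hs : Function.Periodic s (K * T)) (hs' : Function.Periodic s' (K * T))
    (hs0 : ∀ k, s (k * T) = 0) (hs'0 : ∀ k, s' (k * T) = 1)
    (hcol : ∀ k i, 1 ≤ i → i < T → s (k * T + i) = a i k)
    (hcol' : ∀ k i, 1 ≤ i → i < T → s' (k * T + i) = a i k)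
    (τ1 τ2 : ℕ) (h1 : 1 ≤ τ2) (h2 : τ2 < T) :
    corr (K * T) s s' (τ1 * T + τ2) =
      corr (K * T) s s (τ1 * T + τ2) + 2 * bal K (a (T - τ2)) ∧
    corr (K * T) s' s (τ1 * T + τ2) =
      corr (K * T) s s (τ1 * T + τ2) + 2 * bal K (a τ2) := by
  set τ := τ1 * T + τ2 with hτ
  -- s and s' agree off multiples of T
  have hss' : ∀ m, m % T ≠ 0 → s m = s' m := by
    intro m hm
    have hmod : m % T < T := Nat.mod_lt _ hT
    have hrep : m = (m / T) * T + m % T := by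
      rw [Nat.div_add_mod'] -- maybe not; fix below
    rw [hrep, hcol _ _ (by omega) hmod, hcol' _ _ (by omega) hmod]
  -- mod computation
  have hmodT : ∀ k i, (k * T + i + τ) % T = (i + τ2) % T := by
    intro k i
    rw [hτ, show k * T + i + (τ1 * T + τ2) = (k + τ1) * T + (i + τ2) by ring, show (k + τ1) * T + (i + τ2) = (i + τ2) + (k + τ1) * T by ring,
      Nat.add_mul_mod_self_right]
  constructor
  · -- first part
    have key : corr (K*T) s s' τ - corr (K*T) s s τ = 2 * bal K (a (T - τ2)) := by
      unfold corr
      rw [← Finset.sum_sub_distrib, reindex]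
      have inner : ∀ k ∈ Finset.range K,
          (∑ i ∈ Finset.range T,
            ((-1:ℤ) ^ ((s (k*T+i) + s' (k*T+i + τ)).val) - (-1:ℤ) ^ ((s (k*T+i) + s (k*T+i + τ)).val)))
          = (-2) * (-1)^((a (T - τ2) k).val) := by
        intro k _
        rw [Finset.sum_eq_single_of_mem (T - τ2) (Finset.mem_range.mpr (by omega))]
        · have harg : k*T + (T - τ2) + τ = (k + 1 + τ1) * T := by
            rw [hτ, show k*T + (T - τ2) + (τ1 * T + τ2) = k*T + ((T - τ2) + τ2) + τ1*T by ring,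
              Nat.sub_add_cancel (le_of_lt h2)]
            ring
          rw [harg, hs0, hs'0, hcol _ _ (by omega) (by omega)]
          have : ∀ x : ZMod 2, (-1:ℤ)^((x+1).val) - (-1)^((x+0).val) = -2*(-1)^(x.val) := by decide
          exact this _
        · intro i hi hne
          have hiT : i < T := Finset.mem_range.mp hi
          have : s (k*T+i+τ) = s' (k*T+i+τ) := by
            apply hss'
            rw [hmodT]
            rcases lt_or_ge (i + τ2) T with h | h
            · rw [Nat.mod_eq_of_lt h]; omega
            · rw [Nat.mod_eq_sub_mod h, Nat.mod_eq_of_lt (by omega)]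
              omega
          rw [this]; ring
      rw [Finset.sum_congr rfl inner, balsum]
    linarith [key]
  · -- second part
    have key : corr (K*T) s' s τ - corr (K*T) s s τ = 2 * bal K (a τ2) := by
      unfold corr
      rw [← Finset.sum_sub_distrib, reindex]
      have inner : ∀ k ∈ Finset.range K,
          (∑ i ∈ Finset.range T,
            ((-1:ℤ) ^ ((s' (k*T+i) + s (k*T+i + τ)).val) - (-1:ℤ) ^ ((s (k*T+i) + s (k*T+i + τ)).val)))
          = (-2) * (-1)^((a τ2 (k + τ1)).val) := by
        intro k _
        rw [Finset.sum_eq_single_of_mem 0 (Finset.mem_range.mpr hT)]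
        · have harg : k*T + 0 + τ = (k + τ1) * T + τ2 := by rw [hτ]; ring
          rw [harg, hcol _ _ h1 h2]
          have h0 : k*T + 0 = k*T := by ring
          rw [h0, hs0, hs'0]
          have : ∀ x : ZMod 2, (-1:ℤ)^(((1:ZMod 2)+x).val) - (-1)^(((0:ZMod 2)+x).val) = -2*(-1)^(x.val) := by decide
          exact this _
        · intro i hi hne
          have hiT : i < T := Finset.mem_range.mp hi
          have : s (k*T+i) = s' (k*T+i) := by
            apply hss'
            rw [show k*T+i = i + k*T by ring, Nat.add_mul_mod_self_right, Nat.mod_eq_of_lt hiT]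
            exact hne
          rw [this]; ring
      rw [Finset.sum_congr rfl inner]
      have := shiftm K (fun k => (-2:ℤ) * (-1)^((a τ2 k).val))
        (fun k => by show (-2:ℤ) * (-1)^((a τ2 (k+K)).val) = _; rw [ha τ2 k]) τ1
      rw [this, balsum]
    linarith [key]
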